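/- Kari's 14-tile protoset P is aperiodic: there exists a Wang tiling t : ℤ² → P satisfying the matching conditions, and every Wang tiling with protoset P admits no (a,b) ∈ ℤ² ∖ {(0,0)} with t(i+a, j+b) = t(i,j) for all (i,j) ∈ ℤ². -/

import Mathlib

/-- A Kari tile: north and south colors in `ℚ`, west and east colors in `ℚ × Bool`
(the Boolean tag distinguishes the two families, e.g. the colors `0` and `0'`). -/
abbrev KariTile := ℚ × ℚ × (ℚ × Bool) × (ℚ × Bool)

namespace KariTile
def n (T : KariTile) : ℚ := T.1
def s (T : KariTile) : ℚ := T.2.1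
def w (T : KariTile) : ℚ × Bool := T.2.2.1
def e (T : KariTile) : ℚ × Bool := T.2.2.2
end KariTile

/-- Kari's 14-tile protoset: the union of the 4 tiles of the family `T₂`
(multiplier 2) and the 10 tiles of the family `T_{2/3}` (multiplier 2/3). -/
def kariProtoset : Set KariTile :=
  {T | (T.w.2 = false ∧ T.e.2 = false ∧
        T.n ∈ ({0, 1} : Set ℚ) ∧ T.s ∈ ({1, 2} : Set ℚ) ∧
        T.w.1 ∈ ({-1, 0} : Set ℚ) ∧ T.e.1 ∈ ({-1, 0} : Set ℚ) ∧
        2 * T.n + T.w.1 = T.s + T.e.1) ∨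
       (T.w.2 = true ∧ T.e.2 = true ∧
        T.n ∈ ({1, 2} : Set ℚ) ∧ T.s ∈ ({0, 1, 2} : Set ℚ) ∧
        T.w.1 ∈ ({-1/3, 0, 1/3, 2/3} : Set ℚ) ∧ T.e.1 ∈ ({-1/3, 0, 1/3, 2/3} : Set ℚ) ∧
        (2/3) * T.n + T.w.1 = T.s + T.e.1)}

/-- `t : ℤ² → KariTile` is a Wang tiling with Kari's protoset. -/
def IsKariTiling (t : ℤ × ℤ → KariTile) : Prop :=
  (∀ ij : ℤ × ℤ, t ij ∈ kariProtoset) ∧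
  (∀ i j : ℤ, (t (i, j)).e = (t (i + 1, j)).w ∧ (t (i, j)).n = (t (i, j + 1)).s)

namespace KariAux


noncomputable def m (j : ℤ) : ℤ := Int.clog 3 ((2:ℚ) ^ (j+1)) - 1

noncomputable def x (j : ℤ) : ℚ := 3 ^ (m j) * 2 ^ (-j)

lemma two_zpow_pos (j : ℤ) : (0:ℚ) < 2 ^ j := zpow_pos (by norm_num) j
lemma three_zpow_pos (j : ℤ) : (0:ℚ) < 3 ^ j := zpow_pos (by norm_num) j

lemma mchar (j : ℤ) : (3:ℚ) ^ (m j) < 2 ^ (j+1) ∧ (2:ℚ) ^ (j+1) ≤ 3 ^ (m j + 1) := by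
  have hr : (0:ℚ) < 2 ^ (j+1) := two_zpow_pos _
  constructor
  · have := Int.zpow_pred_clog_lt_self (b := 3) (r := (2:ℚ)^(j+1)) (by norm_num) hr
    simpa [m] using this
  · have := Int.self_le_zpow_clog (b := 3) (hb := by norm_num) ((2:ℚ)^(j+1))
    simpa [m] using this

lemma x_mul (j : ℤ) : x j * 2 ^ j = 3 ^ (m j) := by
  have : (2:ℚ) ^ (-j) * 2 ^ j = 1 := by
    rw [← zpow_add₀ (by norm_num : (2:ℚ) ≠ 0)]; simp
  rw [x, mul_assoc, this, mul_one]

lemma x_bounds (j : ℤ) : 2/3 ≤ x j ∧ x j < 2 := by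
  obtain ⟨h1, h2⟩ := mchar j
  have hp := two_zpow_pos j
  have hxm := x_mul j
  have h2j : (2:ℚ) ^ (j+1) = 2 * 2 ^ j := by
    rw [zpow_add₀ (by norm_num : (2:ℚ) ≠ 0)]; ring
  constructor
  · have h3 : (3:ℚ) ^ (m j + 1) = 3 * 3 ^ (m j) := by
      rw [zpow_add₀ (by norm_num : (3:ℚ) ≠ 0)]; ring
    rw [h3, h2j, ← hxm] at h2
    rw [div_le_iff₀ (by norm_num)]
    nlinarith
  · rw [h2j, ← hxm] at h1
    exact lt_of_mul_lt_mul_right h1 (le_of_lt hp)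

lemma x_pos (j : ℤ) : 0 < x j := lt_of_lt_of_le (by norm_num) (x_bounds j).1

lemma x_unique {j k : ℤ} (h1 : 2/3 ≤ (3:ℚ) ^ k * 2 ^ (-j)) (h2 : (3:ℚ) ^ k * 2 ^ (-j) < 2) :
    x j = 3 ^ k * 2 ^ (-j) := by
  -- derive k = m j
  have hp := two_zpow_pos j
  have hinv : (2:ℚ) ^ (-j) * 2 ^ j = 1 := by
    rw [← zpow_add₀ (by norm_num : (2:ℚ) ≠ 0)]; simp
  have h2j : (2:ℚ) ^ (j+1) = 2 * 2 ^ j := by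
    rw [zpow_add₀ (by norm_num : (2:ℚ) ≠ 0)]; ring
  have hk1 : (3:ℚ) ^ k < 2 ^ (j+1) := by
    have := mul_lt_mul_of_pos_right h2 hp
    rw [mul_assoc, hinv, mul_one] at this
    rw [h2j]; linarith
  have hk2 : (2:ℚ) ^ (j+1) ≤ 3 ^ (k+1) := by
    have := mul_le_mul_of_nonneg_right h1 (le_of_lt hp)
    rw [mul_assoc, hinv, mul_one] at this
    have h3 : (3:ℚ) ^ (k + 1) = 3 * 3 ^ k := by
      rw [zpow_add₀ (by norm_num : (3:ℚ) ≠ 0)]; ring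
    rw [h2j, h3]
    nlinarith
  obtain ⟨h1', h2'⟩ := mchar j
  have hkm : k = m j := by
    have a1 : (3:ℚ) ^ k < 3 ^ (m j + 1) := lt_of_lt_of_le hk1 h2'
    have a2 : (3:ℚ) ^ (m j) < 3 ^ (k+1) := lt_of_lt_of_le h1' hk2
    have b1 : k < m j + 1 := by
      by_contra hc
      push_neg at hc
      exact absurd (zpow_le_zpow_right₀ (by norm_num : (1:ℚ) ≤ 3) hc) (not_le.mpr a1)
    have b2 : m j < k + 1 := by
      by_contra hc
      push_neg at hc
      exact absurd (zpow_le_zpow_right₀ (by norm_num : (1:ℚ) ≤ 3) hc) (not_le.mpr a2)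
    omega
  rw [x, hkm]

noncomputable def q (j : ℤ) : ℚ := if 1 ≤ x j then 2/3 else 2

lemma x_step (j : ℤ) : x (j - 1) = q j * x j := by
  obtain ⟨hl, hu⟩ := x_bounds j
  have hxm : x j = 3 ^ (m j) * 2 ^ (-j) := rfl
  have h2 : (2:ℚ) ^ (-(j-1)) = 2 * 2 ^ (-j) := by
    rw [show -(j-1) = -j + 1 by ring, zpow_add₀ (by norm_num : (2:ℚ) ≠ 0)]; ring
  by_cases h : 1 ≤ x j
  · -- q = 2/3, candidate 3^(m j - 1) * 2^(-(j-1))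
    have hc : (3:ℚ) ^ (m j - 1) * 2 ^ (-(j-1)) = 2/3 * x j := by
      rw [show m j - 1 = m j + (-1) by ring, zpow_add₀ (by norm_num : (3:ℚ) ≠ 0), h2, hxm]
      simp [zpow_neg]
      ring
    have hq : q j = 2/3 := if_pos h
    rw [hq]
    have hb1 : 2/3 ≤ (3:ℚ) ^ (m j - 1) * 2 ^ (-(j-1)) := by rw [hc]; linarith
    have hb2 : (3:ℚ) ^ (m j - 1) * 2 ^ (-(j-1)) < 2 := by rw [hc]; linarith
    rw [x_unique hb1 hb2, hc]
  · -- q = 2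
    push_neg at h
    have hc : (3:ℚ) ^ (m j) * 2 ^ (-(j-1)) = 2 * x j := by
      rw [h2, hxm]; ring
    have hq : q j = 2 := if_neg (not_le.mpr h)
    rw [hq]
    have hb1 : 2/3 ≤ (3:ℚ) ^ (m j) * 2 ^ (-(j-1)) := by rw [hc]; linarith
    have hb2 : (3:ℚ) ^ (m j) * 2 ^ (-(j-1)) < 2 := by rw [hc]; linarith
    rw [x_unique hb1 hb2, hc]



noncomputable def fl (r : ℚ) : ℚ := (⌊r⌋ : ℚ)

lemma fl_diff_bounds (t c : ℚ) (k l : ℤ) (hk : (k:ℚ) ≤ c) (hl : c ≤ (l:ℚ)) :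
    (k:ℚ) ≤ fl (t + c) - fl t ∧ fl (t + c) - fl t ≤ (l:ℚ) := by
  have h1 : ⌊t⌋ + k ≤ ⌊t + c⌋ := by
    rw [← Int.floor_add_intCast t k]
    exact Int.floor_mono (by linarith)
  have h2 : ⌊t + c⌋ ≤ ⌊t⌋ + l := by
    rw [← Int.floor_add_intCast t l]
    exact Int.floor_mono (by linarith)
  unfold fl
  constructor
  · have : ((⌊t⌋ + k : ℤ) : ℚ) ≤ ((⌊t + c⌋ : ℤ) : ℚ) := by exact_mod_cast h1
    push_cast at this; linarith
  · have : ((⌊t + c⌋ : ℤ) : ℚ) ≤ ((⌊t⌋ + l : ℤ) : ℚ) := by exact_mod_cast h2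
    push_cast at this; linarith

/-- the floor difference is an integer plus membership conclusions -/
lemma fl_diff_mem (t c : ℚ) (k l : ℤ) (hk : (k:ℚ) ≤ c) (hl : c ≤ (l:ℚ)) :
    ∃ d : ℤ, fl (t + c) - fl t = (d:ℚ) ∧ k ≤ d ∧ d ≤ l := by
  obtain ⟨h1, h2⟩ := fl_diff_bounds t c k l hk hl
  refine ⟨⌊t + c⌋ - ⌊t⌋, by push_cast [fl]; ring, ?_, ?_⟩
  · have : (k:ℚ) ≤ ((⌊t + c⌋ - ⌊t⌋ : ℤ):ℚ) := by push_cast; simp [fl] at h1 ⊢; linarith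
    exact_mod_cast this
  · have : ((⌊t + c⌋ - ⌊t⌋ : ℤ):ℚ) ≤ (l:ℚ) := by push_cast; simp [fl] at h2 ⊢; linarith
    exact_mod_cast this

lemma w2_mem (y : ℚ) : 2 * fl y - fl (2*y) ∈ ({-1, 0} : Set ℚ) := by
  have h1 : 2*⌊y⌋ ≤ ⌊2*y⌋ := by
    apply Int.le_floor.mpr
    push_cast
    have := Int.floor_le y
    linarith
  have h2 : ⌊2*y⌋ ≤ 2*⌊y⌋ + 1 := by
    have hfy := Int.lt_floor_add_one y
    have hlt : ⌊2*y⌋ < 2*⌊y⌋ + 2 := Int.floor_lt.mpr (by push_cast; linarith)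
    omega
  set z : ℤ := ⌊2*y⌋ - 2*⌊y⌋ with hz
  have hz0 : 0 ≤ z := by omega
  have hz1 : z ≤ 1 := by omega
  have heq : 2 * fl y - fl (2*y) = -(z:ℚ) := by unfold fl; rw [hz]; push_cast; ring
  rw [heq]
  interval_cases z <;> simp

lemma w23_mem (y : ℚ) : 2/3 * fl y - fl (2/3*y) ∈ ({-1/3, 0, 1/3, 2/3} : Set ℚ) := by
  have hf1 := Int.floor_le y
  have hf2 := Int.lt_floor_add_one y
  have hf3 := Int.floor_le (2/3*y)
  have hf4 := Int.lt_floor_add_one (2/3*y)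
  set z : ℤ := 2*⌊y⌋ - 3*⌊2/3*y⌋ with hz
  have hz0 : -1 ≤ z := by
    have : ((3*⌊2/3*y⌋ : ℤ) : ℚ) ≤ 2*y := by push_cast; linarith
    have h2 : ((z:ℤ) : ℚ) > -2 := by push_cast [hz]; push_cast at this; linarith
    have : (-2 : ℤ) < z := by exact_mod_cast h2
    omega
  have hz1 : z ≤ 2 := by
    have : (2:ℚ)*y - 3 < ((3*⌊2/3*y⌋ : ℤ) : ℚ) := by push_cast; linarith
    have h2 : ((z:ℤ) : ℚ) < 3 := by push_cast [hz]; push_cast at this; linarith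
    have : z < 3 := by exact_mod_cast h2
    omega
  have heq : 2/3 * fl y - fl (2/3*y) = (z:ℚ)/3 := by unfold fl; rw [hz]; push_cast; ring
  rw [heq]
  interval_cases z <;> norm_num



-- [chunk1: m, x, q, lemmas]  (assume present)
-- [chunk2: fl lemmas]

noncomputable def T0 (p : ℤ × ℤ) : KariTile :=
  ( fl ((p.1+1) * x p.2) - fl (p.1 * x p.2),
    fl ((p.1+1) * x (p.2-1)) - fl (p.1 * x (p.2-1)),
    (q p.2 * fl (p.1 * x p.2) - fl (p.1 * x (p.2-1)), decide (1 ≤ x p.2)),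
    (q p.2 * fl ((p.1+1) * x p.2) - fl ((p.1+1) * x (p.2-1)), decide (1 ≤ x p.2)) )

lemma fl_diff_mem01 (t c : ℚ) (h0 : 0 ≤ c) (h1 : c ≤ 1) : fl (t+c) - fl t ∈ ({0,1} : Set ℚ) := by
  obtain ⟨d, hd, h2, h3⟩ := fl_diff_mem t c 0 1 (by exact_mod_cast h0) (by exact_mod_cast h1)
  rw [hd]; interval_cases d <;> simp

lemma fl_diff_mem12 (t c : ℚ) (h0 : 1 ≤ c) (h1 : c ≤ 2) : fl (t+c) - fl t ∈ ({1,2} : Set ℚ) := by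
  obtain ⟨d, hd, h2, h3⟩ := fl_diff_mem t c 1 2 (by exact_mod_cast h0) (by exact_mod_cast h1)
  rw [hd]; interval_cases d <;> simp

lemma fl_diff_mem012 (t c : ℚ) (h0 : 0 ≤ c) (h1 : c ≤ 2) : fl (t+c) - fl t ∈ ({0,1,2} : Set ℚ) := by
  obtain ⟨d, hd, h2, h3⟩ := fl_diff_mem t c 0 2 (by exact_mod_cast h0) (by exact_mod_cast h1)
  rw [hd]; interval_cases d <;> simp

lemma T0_mem (p : ℤ × ℤ) : T0 p ∈ kariProtoset := by
  obtain ⟨i, j⟩ := p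
  have hxb := x_bounds j
  have hstep := x_step j
  simp only [kariProtoset, Set.mem_setOf_eq]
  by_cases h : 1 ≤ x j
  · -- family 2/3
    right
    have hq : q j = 2/3 := if_pos h
    have hx1 : x (j-1) = 2/3 * x j := by rw [hstep, hq]
    refine ⟨by simp [T0, KariTile.w, h], by simp [T0, KariTile.e, h], ?_, ?_, ?_, ?_, ?_⟩
    · -- n ∈ {1,2}
      have := fl_diff_mem12 ((i:ℚ) * x j) (x j) h (le_of_lt hxb.2)
      simpa [T0, KariTile.n, show ((i:ℚ) + 1) * x j = (i:ℚ) * x j + x j by ring] using this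
    · -- s ∈ {0,1,2}
      have := fl_diff_mem012 ((i:ℚ) * x (j-1)) (x (j-1)) (by rw [hx1]; nlinarith [hxb.1]) (by rw [hx1]; nlinarith [hxb.2, hxb.1])
      simpa [T0, KariTile.s, show ((i:ℚ) + 1) * x (j-1) = (i:ℚ) * x (j-1) + x (j-1) by ring] using this
    · -- w
      have := w23_mem ((i:ℚ) * x j)
      simpa [T0, KariTile.w, hq, hx1, show (i:ℚ) * (2/3 * x j) = 2/3 * ((i:ℚ) * x j) by ring] using this
    · -- e
      have := w23_mem (((i:ℚ)+1) * x j)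
      simpa [T0, KariTile.e, hq, hx1, show ((i:ℚ)+1) * (2/3 * x j) = 2/3 * (((i:ℚ)+1) * x j) by ring] using this
    · -- relation
      simp only [T0, KariTile.n, KariTile.s, KariTile.w, KariTile.e, hq]
      ring
  · -- family 2
    left
    push_neg at h
    have hq : q j = 2 := if_neg (not_le.mpr h)
    have hx1 : x (j-1) = 2 * x j := by rw [hstep, hq]
    refine ⟨by simp [T0, KariTile.w, not_le.mpr h], by simp [T0, KariTile.e, not_le.mpr h], ?_, ?_, ?_, ?_, ?_⟩
    · have := fl_diff_mem01 ((i:ℚ) * x j) (x j) (by linarith [hxb.1]) (le_of_lt h)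
      simpa [T0, KariTile.n, show ((i:ℚ) + 1) * x j = (i:ℚ) * x j + x j by ring] using this
    · have := fl_diff_mem12 ((i:ℚ) * x (j-1)) (x (j-1)) (by rw [hx1]; nlinarith [hxb.1]) (by rw [hx1]; nlinarith [h, hxb.1])
      simpa [T0, KariTile.s, show ((i:ℚ) + 1) * x (j-1) = (i:ℚ) * x (j-1) + x (j-1) by ring] using this
    · have := w2_mem ((i:ℚ) * x j)
      simpa [T0, KariTile.w, hq, hx1, show (i:ℚ) * (2 * x j) = 2 * ((i:ℚ) * x j) by ring] using this
    · have := w2_mem (((i:ℚ)+1) * x j)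
      simpa [T0, KariTile.e, hq, hx1, show ((i:ℚ)+1) * (2 * x j) = 2 * (((i:ℚ)+1) * x j) by ring] using this
    · simp only [T0, KariTile.n, KariTile.s, KariTile.w, KariTile.e, hq]
      ring

lemma T0_tiling : IsKariTiling T0 := by
  refine ⟨T0_mem, fun i j => ⟨?_, ?_⟩⟩
  · show ((q j * fl ((i+1) * x j) - fl ((i+1) * x (j-1)), decide (1 ≤ x j)) : ℚ × Bool) = _
    simp only [T0, KariTile.w]
    push_cast
    norm_num
  · show (fl ((i+1) * x j) - fl (i * x j) : ℚ) = _
    simp only [T0, KariTile.s]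
    norm_num

end KariAux

namespace KariAp


lemma mem_iff (T : KariTile) (h : T ∈ kariProtoset) :
    (T.w.2 = false ∧ T.e.2 = false ∧
      (T.n = 0 ∨ T.n = 1) ∧ (T.s = 1 ∨ T.s = 2) ∧
      (T.w.1 = -1 ∨ T.w.1 = 0) ∧ (T.e.1 = -1 ∨ T.e.1 = 0) ∧
      2 * T.n + T.w.1 = T.s + T.e.1) ∨
    (T.w.2 = true ∧ T.e.2 = true ∧
      (T.n = 1 ∨ T.n = 2) ∧ (T.s = 0 ∨ T.s = 1 ∨ T.s = 2) ∧
      (T.w.1 = -1/3 ∨ T.w.1 = 0 ∨ T.w.1 = 1/3 ∨ T.w.1 = 2/3) ∧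
      (T.e.1 = -1/3 ∨ T.e.1 = 0 ∨ T.e.1 = 1/3 ∨ T.e.1 = 2/3) ∧
      (2/3) * T.n + T.w.1 = T.s + T.e.1) := by
  simpa [kariProtoset, Set.mem_insert_iff, Set.mem_singleton_iff] using h

section

variable (t : ℤ × ℤ → KariTile)
variable (hmem : ∀ ij : ℤ × ℤ, t ij ∈ kariProtoset)
variable (hmatch : ∀ i j : ℤ, (t (i, j)).e = (t (i + 1, j)).w ∧ (t (i, j)).n = (t (i, j + 1)).s)

-- basic facts
include hmem in
lemma tag_we (i j : ℤ) : (t (i,j)).w.2 = (t (i,j)).e.2 := by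
  rcases mem_iff _ (hmem (i,j)) with h | h
  · rw [h.1, h.2.1]
  · rw [h.1, h.2.1]

include hmem hmatch in
lemma tag_const (i j : ℤ) : (t (i,j)).w.2 = (t (0,j)).w.2 := by
  induction i using Int.induction_on with
  | zero => rfl
  | succ i ih =>
      have h1 : (t ((i:ℤ),j)).e = (t ((i:ℤ)+1,j)).w := (hmatch i j).1
      have := congrArg Prod.snd h1
      rw [← this, ← tag_we t hmem, ih]
  | pred i ih =>
      have h1 : (t (-(i:ℤ)-1,j)).e = (t (-(i:ℤ)-1+1,j)).w := (hmatch (-(i:ℤ)-1) j).1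
      have h2 := congrArg Prod.snd h1
      rw [tag_we t hmem]
      rw [show -(i:ℤ)-1+1 = -(i:ℤ) by ring] at h2
      rw [h2, ih]

noncomputable def Q (j : ℤ) : ℚ := if (t (0,j)).w.2 then 2/3 else 2

include hmem hmatch in
lemma Q_spec (j : ℤ) : (Q t j = 2 ∧ ∀ i, (t (i,j)).w.2 = false) ∨
    (Q t j = 2/3 ∧ ∀ i, (t (i,j)).w.2 = true) := by
  by_cases h : (t (0,j)).w.2
  · right
    exact ⟨if_pos h, fun i => by rw [tag_const t hmem hmatch, h]⟩
  · left
    refine ⟨if_neg h, fun i => by rw [tag_const t hmem hmatch]; exact Bool.not_eq_true _ ▸ (by simpa using h)⟩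

include hmem hmatch in
lemma tile_rel (i j : ℤ) : Q t j * (t (i,j)).n + (t (i,j)).w.1 = (t (i,j)).s + (t (i,j)).e.1 := by
  rcases Q_spec t hmem hmatch j with ⟨hq, hf⟩ | ⟨hq, hf⟩ <;>
  rcases mem_iff _ (hmem (i,j)) with h | h
  · rw [hq]; exact h.2.2.2.2.2.2
  · rw [hf i] at h; exact absurd h.1 (by simp)
  · rw [hf i] at h; exact absurd h.1 (by simp)
  · rw [hq]; exact h.2.2.2.2.2.2

include hmem in
lemma n_bounds (i j : ℤ) : 0 ≤ (t (i,j)).n ∧ (t (i,j)).n ≤ 2 := by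
  rcases mem_iff _ (hmem (i,j)) with h | h <;> rcases h.2.2.1 with h' | h' <;> rw [h'] <;> norm_num

include hmem in
lemma w_bounds (i j : ℤ) : -1 ≤ (t (i,j)).w.1 ∧ (t (i,j)).w.1 ≤ 1 := by
  rcases mem_iff _ (hmem (i,j)) with h | h
  · rcases h.2.2.2.2.1 with h' | h' <;> rw [h'] <;> norm_num
  · rcases h.2.2.2.2.1 with h' | h' | h' | h' <;> rw [h'] <;> norm_num

include hmem hmatch in
lemma no2z (i j : ℤ) : ¬((t (i,j)).n = 0 ∧ (t (i+1,j)).n = 0) := by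
  rintro ⟨h0, h1⟩
  have hw1 : (t (i,j)).e = (t (i+1,j)).w := (hmatch i j).1
  rcases mem_iff _ (hmem (i,j)) with h | h
  · -- family 2, n = 0
    have hrel := h.2.2.2.2.2.2
    rw [h0] at hrel
    have he : (t (i,j)).e.1 = -1 := by
      rcases h.2.2.2.1 with hs | hs <;> rcases h.2.2.2.2.1 with hw | hw <;>
        rcases h.2.2.2.2.2.1 with he | he <;> rw [hs, hw, he] at hrel <;> first | rfl | linarith
    have hw : (t (i+1,j)).w.1 = -1 := by rw [← congrArg Prod.fst hw1, he]
    rcases mem_iff _ (hmem (i+1,j)) with h2 | h2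
    · have hrel2 := h2.2.2.2.2.2.2
      rw [h1, hw] at hrel2
      rcases h2.2.2.2.1 with hs | hs <;> rcases h2.2.2.2.2.2.1 with he2 | he2 <;>
        rw [hs, he2] at hrel2 <;> linarith
    · rcases h2.2.2.1 with hn | hn <;> rw [h1] at hn <;> norm_num at hn
  · rcases h.2.2.1 with hn | hn <;> rw [h0] at hn <;> norm_num at hn

include hmem hmatch in
lemma pair_ge (i j : ℤ) : 1 ≤ (t (i,j)).n + (t (i+1,j)).n := by
  have hb0 := n_bounds t hmem i j
  have hb1 := n_bounds t hmem (i+1) j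
  have hz := no2z t hmem hmatch i j
  have hv : ∀ i' j', (t (i',j')).n = 0 ∨ 1 ≤ (t (i',j')).n := by
    intro i' j'
    rcases mem_iff _ (hmem (i',j')) with h | h <;> rcases h.2.2.1 with h' | h' <;> rw [h'] <;> norm_num
  rcases hv i j with h | h
  · rcases hv (i+1) j with h2 | h2
    · exact absurd ⟨h, h2⟩ hz
    · linarith
  · linarith

noncomputable def S (j : ℤ) (N : ℕ) : ℚ := ∑ k ∈ Finset.range N, (t ((k:ℤ), j)).n

include hmem in
lemma S_nonneg (j : ℤ) (N : ℕ) : 0 ≤ S t j N :=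
  Finset.sum_nonneg fun k _ => (n_bounds t hmem _ j).1

include hmem hmatch in
lemma S_lb (j : ℤ) (M : ℕ) : (M:ℚ) ≤ S t j (2*M) := by
  induction M with
  | zero => simp [S]
  | succ M ih =>
      have h1 : 2*(M+1) = (2*M) + 1 + 1 := by ring
      rw [h1]
      unfold S
      rw [Finset.sum_range_succ, Finset.sum_range_succ]
      have hp := pair_ge t hmem hmatch ((2*M : ℕ) : ℤ) j
      have hc : (((2*M + 1 : ℕ)) : ℤ) = ((2*M : ℕ) : ℤ) + 1 := by push_cast; ring
      rw [hc]
      unfold S at ih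
      push_cast
      push_cast at ih hp
      linarith

include hmatch in
lemma s_eq_n (i j : ℤ) : (t (i,j)).s = (t (i,j-1)).n := by
  have := (hmatch i (j-1)).2
  rw [show j - 1 + 1 = j by ring] at this
  exact this.symm

include hmem hmatch in
lemma tel (j : ℤ) (N : ℕ) :
    Q t j * S t j N - S t (j-1) N = (t ((N:ℤ),j)).w.1 - (t (0,j)).w.1 := by
  induction N with
  | zero => simp [S]
  | succ N ih =>
      unfold S at ih ⊢
      rw [Finset.sum_range_succ, Finset.sum_range_succ]
      have hrel := tile_rel t hmem hmatch ((N:ℕ):ℤ) j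
      have hs := s_eq_n t hmatch ((N:ℕ):ℤ) j
      have he : (t ((N:ℤ),j)).e.1 = (t ((N:ℤ)+1,j)).w.1 :=
        congrArg Prod.fst (hmatch ((N:ℤ)) j).1
      have hc : (((N + 1 : ℕ)) : ℤ) = ((N : ℕ) : ℤ) + 1 := by push_cast; ring
      rw [hc]
      rw [hs, he] at hrel
      ring_nf
      ring_nf at ih hrel
      linarith

include hmem hmatch in
lemma approx (j : ℤ) (N : ℕ) : |Q t j * S t j N - S t (j-1) N| ≤ 2 := by
  rw [tel t hmem hmatch j N]
  have h1 := w_bounds t hmem ((N:ℤ)) j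
  have h2 := w_bounds t hmem 0 j
  rw [abs_le]
  constructor <;> linarith

include hmem in
lemma n_vals (i j : ℤ) : (t (i,j)).n = 0 ∨ (t (i,j)).n = 1 ∨ (t (i,j)).n = 2 := by
  rcases mem_iff _ (hmem (i,j)) with h | h <;> rcases h.2.2.1 with h' | h' <;> tauto

include hmem in
lemma S_int (j : ℤ) (N : ℕ) : ∃ z : ℤ, S t j N = (z:ℚ) ∧ 0 ≤ z ∧ z ≤ 2*N := by
  induction N with
  | zero => exact ⟨0, by simp [S], le_refl _, by simp⟩
  | succ N ih =>
      obtain ⟨z, hz, h0, h1⟩ := ih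
      unfold S at hz ⊢
      rcases n_vals t hmem ((N:ℕ):ℤ) j with h | h | h
      · exact ⟨z, by rw [Finset.sum_range_succ, hz, h]; ring, h0, by omega⟩
      · exact ⟨z+1, by rw [Finset.sum_range_succ, hz, h]; push_cast; ring, by omega, by omega⟩
      · exact ⟨z+2, by rw [Finset.sum_range_succ, hz, h]; push_cast; ring, by omega, by omega⟩

include hmem hmatch in
lemma Q_cases (j : ℤ) : Q t j = 2 ∨ Q t j = 2/3 := by
  rcases Q_spec t hmem hmatch j with ⟨hq, _⟩ | ⟨hq, _⟩ <;> tauto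

include hmem hmatch in
lemma noHoriz (a : ℤ) (ha : 0 < a) (hp : ∀ i j : ℤ, t (i + a, j) = t (i, j)) : False := by
  set A : ℕ := a.toNat with hA
  have hAa : (A:ℤ) = a := Int.toNat_of_nonneg (le_of_lt ha)
  have hA0 : A ≠ 0 := by omega
  -- exact telescoping
  have exact_tel : ∀ j : ℤ, Q t j * S t j A = S t (j-1) A := by
    intro j
    have h := tel t hmem hmatch j A
    have h2 : t ((A:ℤ), j) = t (0, j) := by
      have := hp 0 j
      rw [zero_add] at this
      rw [hAa]; exact this
    rw [h2] at h
    linarith [h]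
  -- positivity
  have Tpos : ∀ j : ℤ, 0 < S t j A := by
    intro j
    rcases lt_or_eq_of_le (S_nonneg t hmem j A) with h | h
    · exact h
    · exfalso
      have hall : ∀ k ∈ Finset.range A, (t ((k:ℤ), j)).n = 0 := by
        unfold S at h
        have := (Finset.sum_eq_zero_iff_of_nonneg (s := Finset.range A)
          (f := fun k : ℕ => (t ((k:ℤ), j)).n)
          (fun k _ => (n_bounds t hmem ((k:ℤ)) j).1)).mp h.symm
        exact fun k hk => this k hk
      have h0 : (t ((0:ℤ), j)).n = 0 := by
        have := hall 0 (Finset.mem_range.mpr (Nat.pos_of_ne_zero hA0))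
        simpa using this
      have h1 : (t ((1:ℤ), j)).n = 0 := by
        by_cases hA1 : A = 1
        · have ha1 : a = 1 := by omega
          have := hp 0 j
          rw [zero_add, ha1] at this
          rw [this]; exact h0
        · have := hall 1 (Finset.mem_range.mpr (by omega))
          simpa using this
      exact no2z t hmem hmatch 0 j ⟨h0, by rw [zero_add]; exact h1⟩
  -- chain
  have chain : ∀ (k : ℕ) (j : ℤ), ∃ d : ℕ, (3:ℚ)^d * S t j A = 2^k * S t (j + k) A := by
    intro k
    induction k with
    | zero => intro j; exact ⟨0, by simp⟩
    | succ k ih =>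
        intro j
        obtain ⟨d, hd⟩ := ih j
        have hrel := exact_tel (j + k + 1)
        rw [show j + (k:ℤ) + 1 - 1 = j + k by ring] at hrel
        have hidx : (j + ((k+1 : ℕ) : ℤ)) = j + (k:ℤ) + 1 := by push_cast; ring
        rcases Q_cases t hmem hmatch (j + (k:ℤ) + 1) with hq | hq
        · refine ⟨d, ?_⟩
          rw [hidx, hd, ← hrel, hq]
          ring
        · refine ⟨d + 1, ?_⟩
          rw [hidx, pow_succ, pow_succ]
          rw [← hrel, hq] at hd
          nlinarith [hd]
  -- pigeonhole
  have Tint : ∀ n : ℕ, ∃ z : ℤ, S t (n:ℤ) A = (z:ℚ) ∧ 0 ≤ z ∧ z ≤ 2*A := fun n => S_int t hmem (n:ℤ) A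
  let f : ℕ → Finset.Icc (0:ℤ) (2*A) := fun n =>
    ⟨(Tint n).choose, Finset.mem_Icc.mpr ⟨(Tint n).choose_spec.2.1, (Tint n).choose_spec.2.2⟩⟩
  obtain ⟨m, n, hmn, hfeq⟩ := Finite.exists_ne_map_eq_of_infinite f
  wlog hlt : m < n generalizing m n
  · exact this n m hmn.symm hfeq.symm (by omega)
  have hSeq : S t (m:ℤ) A = S t (n:ℤ) A := by
    have h1 := (Tint m).choose_spec.1
    have h2 := (Tint n).choose_spec.1
    have : (Tint m).choose = (Tint n).choose := congrArg Subtype.val hfeq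
    rw [h1, h2, this]
  obtain ⟨d, hd⟩ := chain (n - m) (m:ℤ)
  have hidx : ((m:ℤ) + ((n - m : ℕ):ℤ)) = (n:ℤ) := by omega
  rw [hidx, ← hSeq] at hd
  have hcan : (3:ℚ)^d = 2^(n-m) := mul_right_cancel₀ (ne_of_gt (Tpos (m:ℤ))) hd
  have hnat : (3:ℕ)^d = 2^(n-m) := by exact_mod_cast hcan
  have hk0 : n - m ≠ 0 := by omega
  have hdvd : (2:ℕ) ∣ 3^d := hnat ▸ dvd_pow_self 2 hk0
  have := Nat.Prime.dvd_of_dvd_pow Nat.prime_two hdvd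
  norm_num at this

include hmem in
lemma shift1 (r j : ℤ) (N : ℕ) :
    |(∑ k ∈ Finset.range N, (t ((k:ℤ) + r + 1, j)).n) -
     (∑ k ∈ Finset.range N, (t ((k:ℤ) + r, j)).n)| ≤ 2 := by
  set g : ℕ → ℚ := fun k => (t ((k:ℤ) + r, j)).n with hg
  have h1 : (∑ k ∈ Finset.range N, (t ((k:ℤ) + r + 1, j)).n) = ∑ k ∈ Finset.range N, g (k+1) := by
    refine Finset.sum_congr rfl fun k _ => ?_
    simp only [hg]
    congr 1
    push_cast
    ring_nf
  have h2 : ∑ k ∈ Finset.range (N+1), g k = (∑ k ∈ Finset.range N, g (k+1)) + g 0 :=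
    Finset.sum_range_succ' g N
  have h3 : ∑ k ∈ Finset.range (N+1), g k = (∑ k ∈ Finset.range N, g k) + g N :=
    Finset.sum_range_succ g N
  have hb0 := n_bounds t hmem ((0:ℤ) + r) j
  have hbN := n_bounds t hmem ((N:ℤ) + r) j
  rw [h1]
  have : (∑ k ∈ Finset.range N, g (k+1)) - (∑ k ∈ Finset.range N, g k) = g N - g 0 := by
    rw [h3] at h2
    linarith [h2]
  rw [this]
  simp only [hg, Nat.cast_zero] at *
  rw [abs_le]
  constructor <;> [linarith [hb0.1, hb0.2, hbN.1, hbN.2]; linarith [hb0.1, hb0.2, hbN.1, hbN.2]]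

include hmem in
lemma shift (r j : ℤ) (N : ℕ) :
    |(∑ k ∈ Finset.range N, (t ((k:ℤ) + r, j)).n) - S t j N| ≤ 2 * (r.natAbs : ℚ) := by
  induction r using Int.induction_on with
  | zero => simp [S]
  | succ i ih =>
      have hcong : (∑ k ∈ Finset.range N, (t ((k:ℤ) + ((i:ℤ)+1), j)).n)
          = ∑ k ∈ Finset.range N, (t ((k:ℤ) + (i:ℤ) + 1, j)).n :=
        Finset.sum_congr rfl fun k _ => by rw [show (k:ℤ) + ((i:ℤ)+1) = (k:ℤ) + i + 1 by ring]
      have h1 := shift1 t hmem (i:ℤ) j N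
      have hna1 : (((i:ℤ) + 1).natAbs : ℚ) = ((i:ℤ).natAbs : ℚ) + 1 := by
        have : ((i:ℤ) + 1).natAbs = (i:ℤ).natAbs + 1 := by omega
        rw [this]; push_cast; ring
      rw [hcong, hna1]
      have htri := abs_sub_le (∑ k ∈ Finset.range N, (t ((k:ℤ) + (i:ℤ) + 1, j)).n)
        (∑ k ∈ Finset.range N, (t ((k:ℤ) + (i:ℤ), j)).n) (S t j N)
      linarith
  | pred i ih =>
      have h1 := shift1 t hmem (-(i:ℤ) - 1) j N
      have hcong : (∑ k ∈ Finset.range N, (t ((k:ℤ) + (-(i:ℤ)-1) + 1, j)).n)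
          = ∑ k ∈ Finset.range N, (t ((k:ℤ) + (-(i:ℤ)), j)).n :=
        Finset.sum_congr rfl fun k _ => by rw [show (k:ℤ) + (-(i:ℤ)-1) + 1 = (k:ℤ) + (-(i:ℤ)) by ring]
      rw [hcong] at h1
      have hna1 : ((-(i:ℤ) - 1).natAbs : ℚ) = ((-(i:ℤ)).natAbs : ℚ) + 1 := by
        have : (-(i:ℤ) - 1).natAbs = (-(i:ℤ)).natAbs + 1 := by omega
        rw [this]; push_cast; ring
      rw [hna1]
      have htri := abs_sub_le (∑ k ∈ Finset.range N, (t ((k:ℤ) + (-(i:ℤ)-1), j)).n)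
        (∑ k ∈ Finset.range N, (t ((k:ℤ) + (-(i:ℤ)), j)).n) (S t j N)
      rw [abs_sub_comm] at h1
      linarith

include hmem hmatch in
lemma approx' (j : ℤ) (N : ℕ) : |Q t (j+1) * S t (j+1) N - S t j N| ≤ 2 := by
  have := approx t hmem hmatch (j+1) N
  rw [show j + 1 - 1 = j by ring] at this
  exact this

include hmem hmatch in
lemma chainB (k : ℕ) (j : ℤ) : ∃ d : ℕ,
    ∀ N, |2^k * (1/3:ℚ)^d * S t (j + k) N - S t j N| ≤ 2^(k+1) - 2 := by
  induction k generalizing j with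
  | zero => exact ⟨0, fun N => by norm_num⟩
  | succ k ih =>
      obtain ⟨d, H⟩ := ih (j+1)
      rcases Q_cases t hmem hmatch (j+1) with hq | hq
      · refine ⟨d, fun N => ?_⟩
        have hA := H N
        have hB := approx' t hmem hmatch j N
        rw [hq] at hB
        have hidx : j + ((k+1 : ℕ) : ℤ) = j + 1 + (k:ℤ) := by push_cast; ring
        have key : (2:ℚ)^(k+1) * (1/3)^d * S t (j + ((k+1:ℕ):ℤ)) N - S t j N
            = 2 * (2^k * (1/3)^d * S t (j+1+(k:ℤ)) N - S t (j+1) N)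
              + (2 * S t (j+1) N - S t j N) := by
          rw [hidx]; ring
        rw [key]
        have htri := abs_add_le (2 * ((2:ℚ)^k * (1/3)^d * S t (j+1+(k:ℤ)) N - S t (j+1) N))
          (2 * S t (j+1) N - S t j N)
        have h2 : |2 * ((2:ℚ)^k * (1/3)^d * S t (j+1+(k:ℤ)) N - S t (j+1) N)|
            = 2 * |(2:ℚ)^k * (1/3)^d * S t (j+1+(k:ℤ)) N - S t (j+1) N| := by
          rw [abs_mul]; norm_num
        have hpow : (2:ℚ)^(k+1+1) - 2 = 2*((2:ℚ)^(k+1) - 2) + 2 := by ring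
        rw [h2] at htri
        rw [hpow]
        linarith
      · refine ⟨d+1, fun N => ?_⟩
        have hA := H N
        have hB := approx' t hmem hmatch j N
        rw [hq] at hB
        have hidx : j + ((k+1 : ℕ) : ℤ) = j + 1 + (k:ℤ) := by push_cast; ring
        have key : (2:ℚ)^(k+1) * (1/3)^(d+1) * S t (j + ((k+1:ℕ):ℤ)) N - S t j N
            = (2/3) * (2^k * (1/3)^d * S t (j+1+(k:ℤ)) N - S t (j+1) N)
              + ((2/3) * S t (j+1) N - S t j N) := by
          rw [hidx]; ring
        rw [key]
        have htri := abs_add_le ((2/3:ℚ) * ((2:ℚ)^k * (1/3)^d * S t (j+1+(k:ℤ)) N - S t (j+1) N))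
          ((2/3:ℚ) * S t (j+1) N - S t j N)
        have h2 : |(2/3:ℚ) * ((2:ℚ)^k * (1/3)^d * S t (j+1+(k:ℤ)) N - S t (j+1) N)|
            = (2/3) * |(2:ℚ)^k * (1/3)^d * S t (j+1+(k:ℤ)) N - S t (j+1) N| := by
          rw [abs_mul]; norm_num
        have hpow : (0:ℚ) < (2:ℚ)^(k+1) - 2 + 2 := by
          have : (0:ℚ) < (2:ℚ)^(k+1) := by positivity
          linarith
        rw [h2] at htri
        have hstep : (2/3:ℚ) * ((2:ℚ)^(k+1) - 2) + 2 ≤ (2:ℚ)^(k+1+1) - 2 := by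
          have e1 : (2:ℚ)^(k+1) = 2*2^k := by ring
          have e2 : (2:ℚ)^(k+1+1) = 4*2^k := by ring
          rw [e1, e2]
          have h4 : (1:ℚ) ≤ (2:ℚ)^k := one_le_pow₀ (by norm_num)
          nlinarith
        have habs0 : (0:ℚ) ≤ |(2:ℚ)^k * (1/3)^d * S t (j+1+(k:ℤ)) N - S t (j+1) N| := abs_nonneg _
        nlinarith [htri, hA, hB]

include hmem hmatch in
lemma noVert (a b : ℤ) (hb : 0 < b) (hp : ∀ i j : ℤ, t (i + a, j + b) = t (i, j)) : False := by
  set B : ℕ := b.toNat with hB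
  have hBb : (B:ℤ) = b := Int.toNat_of_nonneg (le_of_lt hb)
  have hB0 : B ≠ 0 := by omega
  obtain ⟨d, H⟩ := chainB t hmem hmatch B 0
  -- compare S t b N with S t 0 N
  have hcomp : ∀ N : ℕ, |S t b N - S t 0 N| ≤ 2 * (a.natAbs : ℚ) + 0 := by
    intro N
    have hpw : ∀ k : ℕ, (t ((k:ℤ), 0)).n = (t ((k:ℤ) + a, b)).n := by
      intro k
      have := hp (k:ℤ) 0
      rw [zero_add] at this
      rw [this]
    have h0 : S t 0 N = ∑ k ∈ Finset.range N, (t ((k:ℤ) + a, b)).n := by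
      unfold S
      exact Finset.sum_congr rfl fun k _ => hpw k
    have := shift t hmem a b N
    rw [← h0] at this
    rw [abs_sub_comm]
    linarith
  set r : ℚ := 2^B * (1/3:ℚ)^d with hr
  have hSb : ∀ N, |r * S t b N - S t 0 N| ≤ 2^(B+1) - 2 := by
    intro N
    have := H N
    rw [show (0:ℤ) + (B:ℤ) = b by omega] at this
    exact this
  by_cases hr1 : r = 1
  · -- 2^B = 3^d, impossible
    have h3d : (3:ℚ)^d ≠ 0 := by positivity
    have : (2:ℚ)^B = 3^d := by
      rw [hr, one_div, inv_pow, ← div_eq_mul_inv, div_eq_one_iff_eq h3d] at hr1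
      exact hr1
    have hnat : (2:ℕ)^B = 3^d := by exact_mod_cast this
    have hdvd : (2:ℕ) ∣ 3^d := hnat ▸ dvd_pow_self 2 hB0
    have := Nat.Prime.dvd_of_dvd_pow Nat.prime_two hdvd
    norm_num at this
  · have heps : 0 < |r - 1| := abs_pos.mpr (sub_ne_zero.mpr hr1)
    set C : ℚ := 2^(B+1) - 2 + 2 * (a.natAbs : ℚ) with hC
    have hCb : ∀ N, |r - 1| * S t b N ≤ C := by
      intro N
      have h1 := hSb N
      have h2 := hcomp N
      have h3 : |r - 1| * S t b N = |(r - 1) * S t b N| := by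
        rw [abs_mul, abs_of_nonneg (S_nonneg t hmem b N)]
      have h4 : (r - 1) * S t b N = (r * S t b N - S t 0 N) + (S t 0 N - S t b N) := by ring
      rw [h3, h4]
      refine le_trans (abs_add_le (r * S t b N - S t 0 N) (S t 0 N - S t b N)) ?_
      rw [abs_sub_comm (S t 0 N) (S t b N), hC]
      linarith
    obtain ⟨M, hM⟩ := exists_nat_gt (C / |r - 1|)
    have hMb := S_lb t hmem hmatch b M
    have h5 := hCb (2*M)
    have h6 : C / |r - 1| * |r - 1| < (M:ℚ) * |r - 1| := by
      exact mul_lt_mul_of_pos_right hM heps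
    rw [div_mul_cancel₀ _ (ne_of_gt heps)] at h6
    nlinarith [S_nonneg t hmem b (2*M)]

end

end KariAp

/-- Kari's 14-tile protoset is aperiodic: tilings exist, and none is periodic. -/
theorem stmt5 :
    (∃ t : ℤ × ℤ → KariTile, IsKariTiling t) ∧
    (∀ t : ℤ × ℤ → KariTile, IsKariTiling t →
      ¬ ∃ ab : ℤ × ℤ, ab ≠ (0, 0) ∧
        ∀ i j : ℤ, t (i + ab.1, j + ab.2) = t (i, j)) := by
  constructor
  · exact ⟨KariAux.T0, KariAux.T0_tiling⟩
  · rintro t ⟨hmem, hmatch⟩ ⟨⟨a, b⟩, hab, hper⟩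
    simp only at hper
    have hneg : ∀ i j : ℤ, t (i + -a, j + -b) = t (i, j) := by
      intro i j
      have h := hper (i - a) (j - b)
      rw [show i - a + a = i by ring, show j - b + b = j by ring] at h
      rw [show i + -a = i - a by ring, show j + -b = j - b by ring]
      exact h.symm
    rcases lt_trichotomy b 0 with hb | hb | hb
    · exact KariAp.noVert t hmem hmatch (-a) (-b) (by omega) hneg
    · subst hb
      have ha : a ≠ 0 := by
        intro h
        exact hab (by rw [h])
      rcases lt_trichotomy a 0 with ha' | ha' | ha'
      · apply KariAp.noHoriz t hmem hmatch (-a) (by omega)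
        intro i j
        have h := hneg i j
        simpa using h
      · exact ha ha'
      · apply KariAp.noHoriz t hmem hmatch a ha'
        intro i j
        have h := hper i j
        simpa using h
    · exact KariAp.noVert t hmem hmatch a b hb hper
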